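/- Remove Data equivalence: with full memory M = X, the gradient of −ℓ_k(w) + K(w; w*, X) equals the gradient of Σ_{i∈D∖{k}} ℓ_i(w) + (δ/2)‖w‖² at every w; hence under strict convexity of both objectives their minimizers coincide. -/

import Mathlib

open RealInnerProductSpace

section Aux

variable {P : ℕ}

private lemma aux_term {ι : Type*} (φ : ι → EuclideanSpace ℝ (Fin P))
    (A h : ℝ → ℝ) (hA : ∀ x, HasDerivAt A (h x) x) (c : ℝ) (i : ι)
    (w : EuclideanSpace ℝ (Fin P)) :
    HasFDerivAt (fun w : EuclideanSpace ℝ (Fin P) => c * ⟪φ i, w⟫ + A ⟪φ i, w⟫)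
      ((c + h ⟪φ i, w⟫) • innerSL ℝ (φ i)) w := by
  have hi : HasFDerivAt (fun w : EuclideanSpace ℝ (Fin P) => ⟪φ i, w⟫)
      (innerSL ℝ (φ i)) w := (innerSL ℝ (φ i)).hasFDerivAt
  have h1 := hi.const_mul c
  have h2 := (hA ⟪φ i, w⟫).comp_hasFDerivAt w hi
  have := h1.add h2
  rwa [← add_smul] at this

end Aux

/-- Remove Data equivalence: with full memory `M = X`, the gradient of
`−ℓ_k(w) + K(w; w*, X)` equals the gradient of `Σ_{i∈D∖{k}} ℓ_i(w) + (δ/2)‖w‖²`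
at every `w`; hence under strict convexity of both objectives their (global)
minimizers coincide. -/
theorem stmt4 {P : ℕ} {ι : Type*} [DecidableEq ι] (D : Finset ι) (k : ι) (hk : k ∈ D)
    (φ : ι → EuclideanSpace ℝ (Fin P)) (y : ι → ℝ)
    (A h : ℝ → ℝ) (hA : ∀ x, HasDerivAt A (h x) x)
    (δ : ℝ) (hδ : 0 < δ)
    (wstar : EuclideanSpace ℝ (Fin P))
    (hstat : ∑ i ∈ D, (h ⟪φ i, wstar⟫ - y i) • φ i + δ • wstar = 0)
    (F : EuclideanSpace ℝ (Fin P) → ℝ)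
    (hF : F = fun w => ∑ i ∈ D.erase k, (-(y i) * ⟪φ i, w⟫ + A ⟪φ i, w⟫)
            + (δ / 2) * ‖w‖ ^ 2)
    (G : EuclideanSpace ℝ (Fin P) → ℝ)
    (hG : G = fun w => -(-(y k) * ⟪φ k, w⟫ + A ⟪φ k, w⟫)
            + (∑ i ∈ D, (-(h ⟪φ i, wstar⟫) * ⟪φ i, w⟫ + A ⟪φ i, w⟫)
               + (δ / 2) * ‖w - wstar‖ ^ 2)) :
    (∀ w, gradient G w = gradient F w) ∧
    (∀ wminus whatminus : EuclideanSpace ℝ (Fin P),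
      StrictConvexOn ℝ Set.univ F → StrictConvexOn ℝ Set.univ G →
      (∀ w, F wminus ≤ F w) → (∀ w, G whatminus ≤ G w) → whatminus = wminus) := by
  classical
  -- the common Fréchet derivative
  set LF : EuclideanSpace ℝ (Fin P) → (EuclideanSpace ℝ (Fin P) →L[ℝ] ℝ) := fun w =>
    (∑ i ∈ D.erase k, (-(y i) + h ⟪φ i, w⟫) • innerSL ℝ (φ i)) + δ • innerSL ℝ w with hLF
  set LG : EuclideanSpace ℝ (Fin P) → (EuclideanSpace ℝ (Fin P) →L[ℝ] ℝ) := fun w =>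
    (-((-(y k) + h ⟪φ k, w⟫) • innerSL ℝ (φ k))) +
      ((∑ i ∈ D, (-(h ⟪φ i, wstar⟫) + h ⟪φ i, w⟫) • innerSL ℝ (φ i)) +
        δ • innerSL ℝ (w - wstar)) with hLG
  have hFd : ∀ w, HasFDerivAt F (LF w) w := by
    intro w
    rw [hF]
    have hs := HasFDerivAt.fun_sum (fun i (_ : i ∈ D.erase k) => aux_term φ A h hA (-(y i)) i w)
    have hn : HasFDerivAt (fun w : EuclideanSpace ℝ (Fin P) => (δ / 2) * ‖w‖ ^ 2) (δ • innerSL ℝ w) w := by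
      have := (hasFDerivAt_id w).norm_sq.const_mul (δ / 2)
      refine this.congr_fderiv ?_
      ext v
      simp [smul_smul]
      ring
    exact hs.add hn
  have hGd : ∀ w, HasFDerivAt G (LG w) w := by
    intro w
    rw [hG]
    have h1 := (aux_term φ A h hA (-(y k)) k w).neg
    have hs := HasFDerivAt.fun_sum
      (fun i (_ : i ∈ D) => aux_term φ A h hA (-(h ⟪φ i, wstar⟫)) i w)
    have hn : HasFDerivAt (fun w : EuclideanSpace ℝ (Fin P) => (δ / 2) * ‖w - wstar‖ ^ 2)
        (δ • innerSL ℝ (w - wstar)) w := by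
      have := ((hasFDerivAt_id w).sub_const wstar).norm_sq.const_mul (δ / 2)
      refine this.congr_fderiv ?_
      ext v
      simp [smul_smul]
      ring
    exact h1.add (hs.add hn)
  have hLL : ∀ w, LG w = LF w := by
    intro w
    ext v
    have hstat' : ∑ i ∈ D, (h ⟪φ i, wstar⟫ - y i) * ⟪φ i, v⟫ + δ * ⟪wstar, v⟫ = 0 := by
      have := congrArg (fun u : EuclideanSpace ℝ (Fin P) => ⟪u, v⟫) hstat
      simp only [inner_add_left, sum_inner, real_inner_smul_left, inner_zero_left,
        smul_eq_mul] at this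
      exact this
    have herase : ∑ i ∈ D.erase k, (-(y i) + h ⟪φ i, w⟫) * ⟪φ i, v⟫
        = (∑ i ∈ D, (-(y i) + h ⟪φ i, w⟫) * ⟪φ i, v⟫) - (-(y k) + h ⟪φ k, w⟫) * ⟪φ k, v⟫ :=
      Finset.sum_erase_eq_sub hk
    have hkey : (∑ i ∈ D, (-(h ⟪φ i, wstar⟫) + h ⟪φ i, w⟫) * ⟪φ i, v⟫)
        - (∑ i ∈ D, (-(y i) + h ⟪φ i, w⟫) * ⟪φ i, v⟫)
        = δ * ⟪wstar, v⟫ := by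
      rw [← Finset.sum_sub_distrib]
      have : ∀ i ∈ D, (-(h ⟪φ i, wstar⟫) + h ⟪φ i, w⟫) * ⟪φ i, v⟫
          - (-(y i) + h ⟪φ i, w⟫) * ⟪φ i, v⟫
          = -((h ⟪φ i, wstar⟫ - y i) * ⟪φ i, v⟫) := by intro i _; ring
      rw [Finset.sum_congr rfl this, Finset.sum_neg_distrib]
      linarith
    simp only [hLF, hLG, ContinuousLinearMap.add_apply, ContinuousLinearMap.neg_apply,
      ContinuousLinearMap.sum_apply, ContinuousLinearMap.smul_apply, innerSL_apply_apply,
      smul_eq_mul, inner_sub_left]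
    rw [herase] at *
    linarith
  constructor
  · intro w
    have h1 : gradient G w = (InnerProductSpace.toDual ℝ (EuclideanSpace ℝ (Fin P))).symm (LG w) :=
      ((hGd w).hasGradientAt).gradient
    have h2 : gradient F w = (InnerProductSpace.toDual ℝ (EuclideanSpace ℝ (Fin P))).symm (LF w) :=
      ((hFd w).hasGradientAt).gradient
    rw [h1, h2, hLL w]
  · intro wminus whatminus hFc hGc hmF hmG
    have hzero : ∀ w : EuclideanSpace ℝ (Fin P), HasFDerivAt (fun w : EuclideanSpace ℝ (Fin P) => G w - F w) (0 : EuclideanSpace ℝ (Fin P) →L[ℝ] ℝ) w := by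
      intro w
      have := (hGd w).sub (hFd w)
      rwa [hLL w, sub_self] at this
    have hconst : ∀ x z : EuclideanSpace ℝ (Fin P), G x - F x = G z - F z :=
      is_const_of_fderiv_eq_zero (fun w => (hzero w).differentiableAt)
        (fun w => (hzero w).fderiv)
    have hmin2 : ∀ w, F whatminus ≤ F w := by
      intro w
      have h1 := hmG w
      have h2 := hconst whatminus w
      linarith
    exact hFc.eq_of_isMinOn (isMinOn_iff.mpr fun x _ => hmin2 x)
      (isMinOn_iff.mpr fun x _ => hmF x) (Set.mem_univ _) (Set.mem_univ _)
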